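/- Let Â ∈ ℝ^{n×n} and B̂ = [B̂₁ ⋯ B̂ₙ] ∈ ℝ^{n×m}. Suppose q = (qˣ, qᵘ) ∈ ℝⁿ×ℝ^m and K ∈ 𝒦(E) satisfy the fixed-point relation q = [Â B̂]ᵀ·[I Kᵀ]·q + [s; r], where K is a greedy gain for qᵘ (i.e., Kᵢᵀqᵘᵢ = min{qᵘᵢ, 0}·Eᵢ for each i). Then the vector p := [I Kᵀ]·q = qˣ + Kᵀqᵘ satisfies the model-based algebraic equation in the estimated dynamics: p = s + Âᵀp + Σᵢ min{rᵢ + B̂ᵢᵀp, 0}·Eᵢ. -/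
import Mathlib


open Matrix Finset

/-- `min{v, 0}`: the minimum of 0 and of all entries of the vector `v`. -/
noncomputable def minZero {α : Type*} [Fintype α] (v : α → ℝ) : ℝ :=
  Finset.univ.fold min 0 v

/-- `‖v‖∞` for a vector: the maximum absolute entry. -/
noncomputable def vecSupNorm {α : Type*} [Fintype α] (v : α → ℝ) : ℝ :=
  Finset.univ.fold max 0 (fun a => |v a|)

/-- `‖M‖∞` for a matrix: the maximum absolute row sum. -/
noncomputable def matInfNorm {α β : Type*} [Fintype α] [Fintype β] (M : Matrix α β ℝ) : ℝ :=
  Finset.univ.fold max 0 (fun a => ∑ b, |M a b|)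

/-- `‖M‖₁` for a matrix: the maximum absolute column sum. -/
noncomputable def matOneNorm {α β : Type*} [Fintype α] [Fintype β] (M : Matrix α β ℝ) : ℝ :=
  matInfNorm Mᵀ

/-- The feasible gain set 𝒦(E): K ≥ 0 entrywise and, for each block i,
either 𝟏ᵀKᵢ = Eᵢᵀ or 𝟏ᵀKᵢ = 0. -/
def feasibleGain {n : ℕ} (m : Fin n → ℕ) (E : Matrix (Fin n) (Fin n) ℝ) :
    Set (Matrix ((i : Fin n) × Fin (m i)) (Fin n) ℝ) :=
  {K | (∀ a j, 0 ≤ K a j) ∧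
    ∀ i : Fin n, (∀ j, ∑ k : Fin (m i), K ⟨i, k⟩ j = E i j) ∨ (∀ k j, K ⟨i, k⟩ j = 0)}

/-- The extended constraint matrix Ē: for each i, mᵢ stacked copies of the row Eᵢᵀ. -/
def extE {n : ℕ} (m : Fin n → ℕ) (E : Matrix (Fin n) (Fin n) ℝ) :
    Matrix ((i : Fin n) × Fin (m i)) (Fin n) ℝ :=
  fun a j => E a.1 j

/-- `K` is a greedy gain for `v`: `K ∈ 𝒦(E)` and `Kᵢᵀ vᵢ = min{vᵢ,0}·Eᵢ` for each block i. -/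
def IsGreedy {n : ℕ} (m : Fin n → ℕ) (E : Matrix (Fin n) (Fin n) ℝ)
    (v : ((i : Fin n) × Fin (m i)) → ℝ)
    (K : Matrix ((i : Fin n) × Fin (m i)) (Fin n) ℝ) : Prop :=
  K ∈ feasibleGain m E ∧
    ∀ i j, (∑ k : Fin (m i), K ⟨i, k⟩ j * v ⟨i, k⟩)
      = minZero (fun k : Fin (m i) => v ⟨i, k⟩) * E i j

/-- The Bellman operator `p ↦ s + Aᵀp + Σᵢ min{rᵢ + Bᵢᵀp, 0}·Eᵢ`. -/
noncomputable def bellman {n : ℕ} (m : Fin n → ℕ) (A : Matrix (Fin n) (Fin n) ℝ)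
    (B : Matrix (Fin n) ((i : Fin n) × Fin (m i)) ℝ)
    (s : Fin n → ℝ) (r : ((i : Fin n) × Fin (m i)) → ℝ)
    (E : Matrix (Fin n) (Fin n) ℝ) (p : Fin n → ℝ) : Fin n → ℝ :=
  fun j => s j + Aᵀ.mulVec p j +
    ∑ i : Fin n, minZero (fun k : Fin (m i) => r ⟨i, k⟩ + Bᵀ.mulVec p ⟨i, k⟩) * E i j

/-- if `(q, K)` satisfies the fixed-point relation
`q = [Â B̂]ᵀ[I Kᵀ]q + [s;r]` with `K` a greedy gain for `qᵘ`, then `p := qˣ + Kᵀqᵘ`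
satisfies the model-based algebraic equation in the estimated dynamics. -/
theorem stmt_13 {n : ℕ} {m : Fin n → ℕ} (hn : 0 < n) (hm : ∀ i, 0 < m i)
    (s : Fin n → ℝ) (hs : ∀ j, 0 ≤ s j)
    (r : ((i : Fin n) × Fin (m i)) → ℝ) (hr : ∀ a, 0 ≤ r a)
    (E : Matrix (Fin n) (Fin n) ℝ) (hE : ∀ i j, 0 ≤ E i j)
    (Ahat : Matrix (Fin n) (Fin n) ℝ) (Bhat : Matrix (Fin n) ((i : Fin n) × Fin (m i)) ℝ)
    (qx : Fin n → ℝ) (qu : ((i : Fin n) × Fin (m i)) → ℝ)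
    (K : Matrix ((i : Fin n) × Fin (m i)) (Fin n) ℝ)
    (hgreedy : IsGreedy m E qu K)
    (hqx : qx = Ahatᵀ.mulVec (qx + Kᵀ.mulVec qu) + s)
    (hqu : qu = Bhatᵀ.mulVec (qx + Kᵀ.mulVec qu) + r) :
    qx + Kᵀ.mulVec qu = bellman m Ahat Bhat s r E (qx + Kᵀ.mulVec qu) := by
  funext j
  have hK : Kᵀ.mulVec qu j
      = ∑ i : Fin n, minZero (fun k : Fin (m i) => qu ⟨i, k⟩) * E i j := by
    have := hgreedy.2
    simp only [Matrix.mulVec, Matrix.transpose_apply, dotProduct]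
    rw [← Finset.univ_sigma_univ, Finset.sum_sigma]
    exact Finset.sum_congr rfl fun i _ => this i j
  have hp : ∀ i, (fun k : Fin (m i) => qu ⟨i, k⟩)
      = (fun k : Fin (m i) => r ⟨i, k⟩ + Bhatᵀ.mulVec (qx + Kᵀ.mulVec qu) ⟨i, k⟩) := by
    intro i; funext k
    conv_lhs => rw [hqu]
    simp [Pi.add_apply, add_comm]
  simp only [bellman, Pi.add_apply]
  conv_lhs => rw [hqx]
  simp only [Pi.add_apply]
  rw [hK]
  simp only [← hp]
  ring
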